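/- arXiv:2205.14959 — 2 statements merged into one kernel-verified Lean document; each statement's English description precedes it below -/
import Mathlib

section
/- Let D be a dataset distance measure, let T be a dataset whose points all lie in a linear subspace N of ℝ^m, and let S = {s_1,...,s_n} be any dataset. Let S̄ = {s̄_1,...,s̄_n} be the dataset of orthogonal projections of the points of S onto N. Then D(S̄, T) ≤ D(S, T). -/
open scoped Classical

/-- A dataset distance measure on finite datasets (multisets of points) in ℝ^m. -/
structure IsDatasetDistance {m : ℕ}
    (D : Multiset (EuclideanSpace ℝ (Fin m)) → Multiset (EuclideanSpace ℝ (Fin m)) → ℝ) : Prop where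
  nonneg : ∀ X X', 0 ≤ D X X'
  refl : ∀ X, D X X = 0
  symm : ∀ X X', D X X' = D X' X
  /-- Axiom 2: replacing a point `d'` of `X` by a point `d` that is closer to `X'`
  does not increase the distance. -/
  replace : ∀ X X' (d' d : EuclideanSpace ℝ (Fin m)), d' ∈ X →
    (∀ x ∈ X', ‖d - x‖ ≤ ‖d' - x‖) → D (d ::ₘ X.erase d') X' ≤ D X X'
  /-- Axiom 3: adjoining a point of `X` to `X'` does not increase the distance. -/
  adjoin : ∀ X X' (d : EuclideanSpace ℝ (Fin m)), d ∈ X → D X (d ::ₘ X') ≤ D X X'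

/-- projecting every point of a dataset `S` onto a subspace `N` containing all
points of `T` does not increase the dataset distance to `T`. -/
theorem stmt_2 {m : ℕ}
    (D : Multiset (EuclideanSpace ℝ (Fin m)) → Multiset (EuclideanSpace ℝ (Fin m)) → ℝ)
    (hD : IsDatasetDistance D)
    (N : Submodule ℝ (EuclideanSpace ℝ (Fin m)))
    (T : Multiset (EuclideanSpace ℝ (Fin m))) (hT : ∀ t ∈ T, t ∈ N)
    (S : Multiset (EuclideanSpace ℝ (Fin m))) :
    D (S.map (fun s => (N.orthogonalProjection s : EuclideanSpace ℝ (Fin m)))) T ≤ D S T := by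
  set f : EuclideanSpace ℝ (Fin m) → EuclideanSpace ℝ (Fin m) :=
    fun s => (N.orthogonalProjection s : EuclideanSpace ℝ (Fin m)) with hf
  have key : ∀ s : EuclideanSpace ℝ (Fin m), ∀ t ∈ T, ‖f s - t‖ ≤ ‖s - t‖ := by
    intro s t ht
    have htN : t ∈ N := hT t ht
    have hproj : f s - t = (N.orthogonalProjection (s - t) : EuclideanSpace ℝ (Fin m)) := by
      have htt : ((N.orthogonalProjection t : N) : EuclideanSpace ℝ (Fin m)) = t :=
        N.starProjection_eq_self_iff.2 htN
      simp only [hf, map_sub, htt,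
        Submodule.coe_sub]
    rw [hproj]
    calc ‖(N.orthogonalProjection (s - t) : EuclideanSpace ℝ (Fin m))‖
        ≤ ‖N.orthogonalProjection‖ * ‖s - t‖ := by
          simpa using (N.orthogonalProjection).le_opNorm (s - t)
      _ ≤ 1 * ‖s - t‖ := by
          exact mul_le_mul_of_nonneg_right (Submodule.orthogonalProjectionOnto_norm_le N) (norm_nonneg _)
      _ = ‖s - t‖ := one_mul _
  have main : ∀ (S R : Multiset (EuclideanSpace ℝ (Fin m))),
      D (S.map f + R) T ≤ D (S + R) T := by
    intro S
    induction S using Multiset.induction_on with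
    | empty => simp
    | cons s S ih =>
      intro R
      have h1 : (s ::ₘ S).map f + R = S.map f + (f s ::ₘ R) := by
        simp [Multiset.map_cons, Multiset.cons_add, Multiset.add_cons]
      have h2 : D (S.map f + (f s ::ₘ R)) T ≤ D (S + (f s ::ₘ R)) T := ih _
      have h3 : S + (f s ::ₘ R) = f s ::ₘ (S + R) := by
        rw [Multiset.add_cons]
      have h4 : D (f s ::ₘ (S + R)) T ≤ D (s ::ₘ (S + R)) T := by
        have := hD.replace (s ::ₘ (S + R)) T s (f s) (Multiset.mem_cons_self _ _)
          (fun t ht => key s t ht)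
        simpa using this
      calc D ((s ::ₘ S).map f + R) T = D (S.map f + (f s ::ₘ R)) T := by rw [h1]
        _ ≤ D (S + (f s ::ₘ R)) T := h2
        _ = D (f s ::ₘ (S + R)) T := by rw [h3]
        _ ≤ D (s ::ₘ (S + R)) T := h4
        _ = D (s ::ₘ S + R) T := by rw [Multiset.cons_add]
  simpa using main S 0
end

section
/- Under the assumptions of the multi-formation proposition, the optimum S* = argmin_{S ∈ ℝ^{n×m}} D(S, T) (if it exists) can be chosen with all its points lying in the subspace N; more precisely, there exists a minimizer of D(·, T) over datasets of size n all of whose points lie in N. -/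
open scoped Classical RealInnerProductSpace

/-- View a size-`k` dataset (an element of ℝ^{k×m}) as a multiset of points of ℝ^m. -/
def toDataset {m k : ℕ} (X : Fin k → EuclideanSpace ℝ (Fin m)) :
    Multiset (EuclideanSpace ℝ (Fin m)) := (List.ofFn X : List (EuclideanSpace ℝ (Fin m)))

/-- Projecting onto a subspace does not increase the distance to points of the subspace. -/
lemma proj_closer {m : ℕ} (N : Submodule ℝ (EuclideanSpace ℝ (Fin m)))
    (d x : EuclideanSpace ℝ (Fin m)) (hx : x ∈ N) :
    ‖(Submodule.orthogonalProjectionOnto N d : EuclideanSpace ℝ (Fin m)) - x‖ ≤ ‖d - x‖ := by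
  set p : EuclideanSpace ℝ (Fin m) := (Submodule.orthogonalProjectionOnto N d : EuclideanSpace ℝ (Fin m))
  have horth : inner (𝕜 := ℝ) (d - p) (p - x) = (0 : ℝ) := by
    have h1 : d - p ∈ Nᗮ := N.sub_starProjection_mem_orthogonal d
    have h2 : p - x ∈ N := N.sub_mem (Submodule.orthogonalProjectionOnto N d).2 hx
    have := (Submodule.mem_orthogonal N (d - p)).1 h1 (p - x) h2
    rwa [real_inner_comm] at this
  have hsq : ‖d - x‖ * ‖d - x‖ = ‖d - p‖ * ‖d - p‖ + ‖p - x‖ * ‖p - x‖ := by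
    have := norm_add_sq_eq_norm_sq_add_norm_sq_real horth
    simpa [sub_add_sub_cancel] using this
  nlinarith [norm_nonneg (d - p), norm_nonneg (p - x), norm_nonneg (d - x)]

lemma map_proj_le {m : ℕ}
    (N : Submodule ℝ (EuclideanSpace ℝ (Fin m)))
    (T : Multiset (EuclideanSpace ℝ (Fin m))) (hT : ∀ t ∈ T, t ∈ N)
    (D : Multiset (EuclideanSpace ℝ (Fin m)) → Multiset (EuclideanSpace ℝ (Fin m)) → ℝ)
    (hD : IsDatasetDistance D)
    (X : Multiset (EuclideanSpace ℝ (Fin m))) :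
    ∀ Y, D (X.map (fun d => (Submodule.orthogonalProjectionOnto N d : EuclideanSpace ℝ (Fin m))) + Y) T
      ≤ D (X + Y) T := by
  induction X using Multiset.induction with
  | empty => intro Y; simp
  | cons a X ih =>
    intro Y
    set π : EuclideanSpace ℝ (Fin m) → EuclideanSpace ℝ (Fin m) :=
      fun d => (Submodule.orthogonalProjectionOnto N d : EuclideanSpace ℝ (Fin m))
    have step : D (π a ::ₘ (X.map π + Y)) T ≤ D (a ::ₘ (X.map π + Y)) T := by
      have := hD.replace (a ::ₘ (X.map π + Y)) T a (π a) (Multiset.mem_cons_self _ _)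
        (fun x hx => proj_closer N a x (hT x hx))
      simpa using this
    calc D ((a ::ₘ X).map π + Y) T = D (π a ::ₘ (X.map π + Y)) T := by
          simp [Multiset.map_cons, Multiset.cons_add]
      _ ≤ D (a ::ₘ (X.map π + Y)) T := step
      _ = D (X.map π + (a ::ₘ Y)) T := by
          congr 1
          simp [Multiset.add_cons]
      _ ≤ D (X + (a ::ₘ Y)) T := ih (a ::ₘ Y)
      _ = D (a ::ₘ X + Y) T := by
          congr 1
          simp [Multiset.add_cons, Multiset.cons_add]

/-- if `D(·, T)` attains its minimum over datasets of size `n`, then there exists a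
minimizer all of whose points lie in the subspace `N` (which contains all points of `T`). -/
theorem stmt_4 {m n : ℕ}
    (N : Submodule ℝ (EuclideanSpace ℝ (Fin m)))
    (T : Multiset (EuclideanSpace ℝ (Fin m))) (hT : ∀ t ∈ T, t ∈ N)
    (D : Multiset (EuclideanSpace ℝ (Fin m)) → Multiset (EuclideanSpace ℝ (Fin m)) → ℝ)
    (hD : IsDatasetDistance D)
    (hmin : ∃ Sstar : Fin n → EuclideanSpace ℝ (Fin m),
      ∀ S : Fin n → EuclideanSpace ℝ (Fin m), D (toDataset Sstar) T ≤ D (toDataset S) T) :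
    ∃ Sbar : Fin n → EuclideanSpace ℝ (Fin m), (∀ i, Sbar i ∈ N) ∧
      ∀ S : Fin n → EuclideanSpace ℝ (Fin m), D (toDataset Sbar) T ≤ D (toDataset S) T := by
  obtain ⟨Sstar, hS⟩ := hmin
  set π : EuclideanSpace ℝ (Fin m) → EuclideanSpace ℝ (Fin m) :=
    fun d => (Submodule.orthogonalProjectionOnto N d : EuclideanSpace ℝ (Fin m))
  refine ⟨fun i => π (Sstar i), fun i => (Submodule.orthogonalProjectionOnto N (Sstar i)).2, fun S => ?_⟩
  have hmap : toDataset (fun i => π (Sstar i)) = (toDataset Sstar).map π := by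
    unfold toDataset
    rw [Multiset.map_coe, List.map_ofFn]
    rfl
  have key := map_proj_le N T hT D hD (toDataset Sstar) 0
  simp only [add_zero] at key
  calc D (toDataset fun i => π (Sstar i)) T
      = D ((toDataset Sstar).map π) T := by rw [hmap]
    _ ≤ D (toDataset Sstar) T := key
    _ ≤ D (toDataset S) T := hS S
end
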